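/- Let m ∈ ℕ and let b ∈ k[s_1,…,s_n] satisfy: (1) the total degree of b is at most p·m; (2) τ_j b = b for every j ∈ Fin n; (3) every monomial occurring in b with nonzero coefficient has total degree at least m. Then there exists a polynomial β ∈ k[s_1,…,s_n], homogeneous of degree m, such that b = β(s_1 − s_1^p, …, s_n − s_n^p). -/

import Mathlib

section Aux
open Polynomial

variable {p : ℕ} [Fact p.Prime]

lemma unit_of_lt {A : Type*} [CommRing A] [CharP A p] {e : ℕ} (he : e ≠ 0) (hep : e < p) :
    IsUnit (e : A) := by
  have h1 : (e : ZMod p) ≠ 0 := by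
    rw [Ne, ZMod.natCast_eq_zero_iff]
    exact fun hd => absurd (Nat.le_of_dvd (Nat.pos_of_ne_zero he) hd) (not_le.2 hep)
  have : IsUnit (e : ZMod p) := h1.isUnit
  have := this.map (ZMod.castHom dvd_rfl A)
  simpa using this

lemma const_of_shift_invariant {A : Type*} [CommRing A] [CharP A p] (r : A[X])
    (hd : r.natDegree < p) (hr : r.comp (X + 1) = r) : r.natDegree = 0 := by
  by_contra he0
  set e := r.natDegree with hE
  have he : 1 ≤ e := Nat.one_le_iff_ne_zero.2 he0
  have hr0 : r ≠ 0 := fun h => he0 (by simp [hE, h])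
  have htay : taylor 1 r = r := by
    rw [taylor_apply, C_1]; exact hr
  have hco : (taylor (1 : A) r).coeff (e - 1) = r.coeff (e - 1) := by rw [htay]
  rw [taylor_coeff] at hco
  have hnd : (Polynomial.hasseDeriv (e - 1) r).natDegree < 2 := by
    have := Polynomial.natDegree_hasseDeriv_le r (e - 1)
    omega
  rw [Polynomial.eval_eq_sum_range' hnd] at hco
  have h01 : ∀ i ∈ Finset.range 2, (Polynomial.hasseDeriv (e-1) r).coeff i * (1:A)^i
      = (Polynomial.hasseDeriv (e-1) r).coeff i := by intro i _; simp
  rw [Finset.sum_congr rfl h01] at hco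
  rw [Finset.sum_range_succ, Finset.sum_range_one] at hco
  rw [Polynomial.hasseDeriv_coeff, Polynomial.hasseDeriv_coeff] at hco
  have h1 : 0 + (e - 1) = e - 1 := by omega
  have h2 : 1 + (e - 1) = e := by omega
  rw [h1, h2, Nat.choose_self] at hco
  have h3 : e.choose (e - 1) = e := by
    have := Nat.choose_symm (by omega : 1 ≤ e)
    simpa [Nat.choose_one_right] using this
  rw [h3, Nat.cast_one, one_mul] at hco
  have h4 : (e : A) * r.coeff e = 0 := by linear_combination hco
  have h5 : r.coeff e = 0 := by
    have hu := unit_of_lt (p := p) (A := A) he0 hd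
    exact (hu.mul_right_eq_zero).1 h4
  exact (Polynomial.leadingCoeff_ne_zero.2 hr0) h5

lemma w_monic {A : Type*} [CommRing A] [Nontrivial A] : (Polynomial.X ^ p - Polynomial.X : A[X]).Monic := by
  have hp2 : 2 ≤ p := (Fact.out : p.Prime).two_le
  have h1 : (Polynomial.X : A[X]).degree < (p : ℕ) := by
    rw [Polynomial.degree_X]
    exact_mod_cast hp2
  exact Polynomial.monic_X_pow_sub h1

lemma w_natDegree {A : Type*} [CommRing A] [Nontrivial A] :
    (Polynomial.X ^ p - Polynomial.X : A[X]).natDegree = p := by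
  have hp2 : 2 ≤ p := (Fact.out : p.Prime).two_le
  rw [Polynomial.natDegree_sub_eq_left_of_natDegree_lt] <;>
    simp [Polynomial.natDegree_X_pow, Polynomial.natDegree_X] <;> omega

lemma w_comp_shift {A : Type*} [CommRing A] [CharP A p] :
    (Polynomial.X ^ p - Polynomial.X : A[X]).comp (X + 1) = Polynomial.X ^ p - Polynomial.X := by
  have : ((Polynomial.X + 1 : A[X])) ^ p = Polynomial.X ^ p + 1 := by
    have := add_pow_char (Polynomial.X : A[X]) (1 : A[X]) (p := p)
    simpa using this
  simp [Polynomial.sub_comp, Polynomial.pow_comp, Polynomial.X_comp, this]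

lemma one_var_invariant {A : Type*} [CommRing A] [CharP A p] (f : A[X])
    (hf : f.comp (X + 1) = f) :
    ∃ g : A[X], f = g.comp (Polynomial.X ^ p - Polynomial.X) := by
  have hnt : Nontrivial A := CharP.nontrivial_of_char_ne_one (Fact.out : p.Prime).ne_one
  have hp2 : 2 ≤ p := (Fact.out : p.Prime).two_le
  suffices H : ∀ N (f : A[X]), f.natDegree ≤ N → f.comp (X + 1) = f →
      ∃ g : A[X], f = g.comp (Polynomial.X ^ p - Polynomial.X) from H f.natDegree f le_rfl hf
  intro N
  induction N with
  | zero =>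
    intro f hd _
    obtain ⟨a, rfl⟩ := Polynomial.natDegree_eq_zero.1 (Nat.le_zero.1 hd)
    exact ⟨Polynomial.C a, by simp⟩
  | succ N ih =>
    intro f hd hf
    set w : A[X] := Polynomial.X ^ p - Polynomial.X with hw
    by_cases hdn : f.natDegree ≤ N
    · exact ih f hdn hf
    have hdf : f.natDegree = N + 1 := le_antisymm hd (by omega)
    set q := f /ₘ w with hq
    set r := f %ₘ w with hr
    have hfqr : r + w * q = f := Polynomial.modByMonic_add_div f w
    have hdr : r.degree < w.degree := Polynomial.degree_modByMonic_lt f w_monic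
    -- invariance of q and r
    have hcomp : r.comp (X + 1) + w * q.comp (X + 1) = f := by
      conv_rhs => rw [← hf, ← hfqr]
      rw [Polynomial.add_comp, Polynomial.mul_comp, w_comp_shift]
    have hdr' : (r.comp (X + 1)).degree < w.degree := by
      have : r.comp (X + 1) = Polynomial.taylor 1 r := by rw [Polynomial.taylor_apply, Polynomial.C_1]
      rcases eq_or_ne r 0 with h0 | h0
      · simpa [h0] using hdr
      · have hne : r.comp (X + 1) ≠ 0 := by
          rw [this]
          intro hz
          have := congrArg (Polynomial.taylor (-1 : A)) hz
          rw [Polynomial.taylor_taylor] at this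
          simp at this
          exact h0 this
        rw [Polynomial.degree_eq_natDegree hne, this, Polynomial.natDegree_taylor,
          ← Polynomial.degree_eq_natDegree h0]
        exact hdr
    obtain ⟨hq', hr'⟩ := Polynomial.div_modByMonic_unique (q.comp (X + 1)) (r.comp (X + 1))
      w_monic ⟨hcomp, hdr'⟩
    have hqinv : q.comp (X + 1) = q := hq'.symm
    have hrinv : r.comp (X + 1) = r := hr'.symm
    -- r is a constant
    have hrdeg : r.natDegree < p := by
      have := hdr
      rw [Polynomial.degree_eq_natDegree w_monic.ne_zero, w_natDegree] at this
      rcases eq_or_ne r 0 with h0 | h0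
      · simp [h0]; omega
      · rw [Polynomial.degree_eq_natDegree h0] at this
        exact_mod_cast this
    have hrc := const_of_shift_invariant (p := p) r hrdeg hrinv
    obtain ⟨c, hc⟩ := Polynomial.natDegree_eq_zero.1 hrc
    -- q has smaller degree
    have hqd : q.natDegree ≤ N := by
      rw [hq, Polynomial.natDegree_divByMonic f w_monic, w_natDegree, hdf]; omega
    obtain ⟨gq, hgq⟩ := ih q hqd hqinv
    refine ⟨gq * Polynomial.X + Polynomial.C c, ?_⟩
    have hfr : f = q * w + r := by rw [← hfqr]; ring
    rw [hfr, ← hc, Polynomial.add_comp, Polynomial.mul_comp, Polynomial.X_comp,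
      Polynomial.C_comp, ← hgq]

lemma psi_C {k : Type} [Field k] {n : ℕ} (a : k) :
    MvPolynomial.finSuccEquiv k n (MvPolynomial.C a) = Polynomial.C (MvPolynomial.C a) := by
  rw [← MvPolynomial.algebraMap_eq, AlgEquiv.commutes]
  rw [show (algebraMap k (Polynomial (MvPolynomial (Fin n) k))) a
      = Polynomial.C (algebraMap k (MvPolynomial (Fin n) k) a) from rfl,
    ← MvPolynomial.algebraMap_eq]

lemma psi_C_eq {k : Type} [Field k] {n : ℕ} (a : MvPolynomial (Fin n) k) :
    MvPolynomial.finSuccEquiv k n (MvPolynomial.rename Fin.succ a) = Polynomial.C a := by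
  have h : ((MvPolynomial.finSuccEquiv k n).toAlgHom.comp (MvPolynomial.rename Fin.succ) :
      MvPolynomial (Fin n) k →ₐ[k] Polynomial (MvPolynomial (Fin n) k)) = Polynomial.CAlgHom := by
    apply MvPolynomial.algHom_ext
    intro i
    simp [MvPolynomial.finSuccEquiv_X_succ, Polynomial.CAlgHom]
  exact AlgHom.congr_fun h a

lemma psi_shift_zero {k : Type} [Field k] {n : ℕ} (b : MvPolynomial (Fin (n + 1)) k) :
    MvPolynomial.finSuccEquiv k n
        (MvPolynomial.aeval
          (fun l : Fin (n + 1) => if l = 0 then MvPolynomial.X l + 1 else MvPolynomial.X l) b) =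
      (MvPolynomial.finSuccEquiv k n b).comp (Polynomial.X + 1) := by
  induction b using MvPolynomial.induction_on with
  | C a =>
    rw [MvPolynomial.aeval_C, MvPolynomial.algebraMap_eq, psi_C, Polynomial.C_comp]
  | add f g hf hg => simp only [map_add, Polynomial.add_comp, hf, hg]
  | mul_X f i hf =>
    simp only [map_mul, Polynomial.mul_comp, hf]
    refine congrArg₂ (· * ·) rfl ?_
    refine Fin.cases ?_ ?_ i
    · simp [MvPolynomial.finSuccEquiv_X_zero]
    · intro i
      simp [Fin.succ_ne_zero i, MvPolynomial.finSuccEquiv_X_succ]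

lemma psi_shift_succ {k : Type} [Field k] {n : ℕ} (j : Fin n) (b : MvPolynomial (Fin (n + 1)) k) :
    MvPolynomial.finSuccEquiv k n
        (MvPolynomial.aeval
          (fun l : Fin (n + 1) =>
            if l = j.succ then MvPolynomial.X l + 1 else MvPolynomial.X l) b) =
      Polynomial.map
        (((MvPolynomial.aeval
            (fun l : Fin n => if l = j then MvPolynomial.X l + 1 else MvPolynomial.X l)
          : MvPolynomial (Fin n) k →ₐ[k] MvPolynomial (Fin n) k)
          : MvPolynomial (Fin n) k →+* MvPolynomial (Fin n) k))
        (MvPolynomial.finSuccEquiv k n b) := by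
  induction b using MvPolynomial.induction_on with
  | C a =>
    rw [MvPolynomial.aeval_C, MvPolynomial.algebraMap_eq, psi_C, Polynomial.map_C]
    simp [RingHom.coe_coe, MvPolynomial.aeval_C, MvPolynomial.algebraMap_eq]
  | add f g hf hg => simp only [map_add, Polynomial.map_add, hf, hg]
  | mul_X f i hf =>
    simp only [map_mul, Polynomial.map_mul, hf]
    refine congrArg₂ (· * ·) rfl ?_
    refine Fin.cases ?_ ?_ i
    · simp [Ne.symm (Fin.succ_ne_zero j), MvPolynomial.finSuccEquiv_X_zero]
    · intro i
      by_cases hij : i = j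
      · subst hij
        simp [MvPolynomial.finSuccEquiv_X_succ, RingHom.coe_coe]
      · have hne : (Fin.succ i : Fin (n+1)) ≠ j.succ := by
          simpa [Fin.succ_inj] using hij
        simp [hne, hij, MvPolynomial.finSuccEquiv_X_succ, RingHom.coe_coe]

lemma rename_aeval_t {p : ℕ} {k : Type} [Field k] {n : ℕ} (γ : MvPolynomial (Fin n) k) :
    MvPolynomial.aeval
        (fun j : Fin (n + 1) => MvPolynomial.X j - MvPolynomial.X j ^ p)
        (MvPolynomial.rename Fin.succ γ) =
      MvPolynomial.rename Fin.succ
        (MvPolynomial.aeval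
          (fun j : Fin n => (MvPolynomial.X j : MvPolynomial (Fin n) k)
            - MvPolynomial.X j ^ p) γ) := by
  rw [MvPolynomial.aeval_rename,
    MvPolynomial.comp_aeval_apply
      (f := fun j : Fin n => MvPolynomial.X j - MvPolynomial.X j ^ p)
      (φ := (MvPolynomial.rename (Fin.succ : Fin n → Fin (n+1)) :
        MvPolynomial (Fin n) k →ₐ[k] MvPolynomial (Fin (n+1)) k))]
  rw [show ((fun j : Fin (n+1) => MvPolynomial.X j - MvPolynomial.X j ^ p) ∘ Fin.succ)
      = fun i : Fin n => MvPolynomial.rename (Fin.succ : Fin n → Fin (n+1))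
          ((MvPolynomial.X i : MvPolynomial (Fin n) k) - MvPolynomial.X i ^ p)
    from funext fun i => by simp]

lemma invariant_mem_range {p : ℕ} [Fact p.Prime] {k : Type} [Field k] [CharP k p] (n : ℕ)
    (b : MvPolynomial (Fin n) k)
    (hinv : ∀ j : Fin n,
      MvPolynomial.aeval
        (fun l : Fin n => if l = j then MvPolynomial.X l + 1 else MvPolynomial.X l) b = b) :
    b ∈ (MvPolynomial.aeval (fun j : Fin n => MvPolynomial.X j - MvPolynomial.X j ^ p) :
      MvPolynomial (Fin n) k →ₐ[k] MvPolynomial (Fin n) k).range := by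
  induction n with
  | zero =>
    obtain ⟨a, rfl⟩ := MvPolynomial.C_surjective (Fin 0) b
    refine ⟨MvPolynomial.C a, ?_⟩
    show MvPolynomial.aeval _ (MvPolynomial.C a) = _
    rw [MvPolynomial.aeval_C, MvPolynomial.algebraMap_eq]
  | succ n ih =>
    have hp2 : 2 ≤ p := (Fact.out : p.Prime).two_le
    set ψ := MvPolynomial.finSuccEquiv k n with hψ
    -- invariance in variable 0
    have h0 : (ψ b).comp (Polynomial.X + 1) = ψ b := by
      rw [← psi_shift_zero b, hinv 0]
    obtain ⟨g, hg⟩ := one_var_invariant (p := p) (ψ b) h0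
    set w : Polynomial (MvPolynomial (Fin n) k) := Polynomial.X ^ p - Polynomial.X with hw
    -- coefficients of g are invariant
    have hcoeff : ∀ (j : Fin n) (i : ℕ),
        MvPolynomial.aeval
          (fun l : Fin n => if l = j then MvPolynomial.X l + 1 else MvPolynomial.X l)
          (g.coeff i) = g.coeff i := by
      intro j i
      set τ : MvPolynomial (Fin n) k →ₐ[k] MvPolynomial (Fin n) k :=
        MvPolynomial.aeval
          (fun l : Fin n => if l = j then MvPolynomial.X l + 1 else MvPolynomial.X l) with hτ
      have h1 : Polynomial.map (τ : MvPolynomial (Fin n) k →+* MvPolynomial (Fin n) k) (ψ b)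
          = ψ b := by
        rw [← psi_shift_succ j b, hinv j.succ]
      set τ' : MvPolynomial (Fin n) k →+* MvPolynomial (Fin n) k :=
        (τ : MvPolynomial (Fin n) k →+* MvPolynomial (Fin n) k) with hτ'
      have h2 : (Polynomial.map τ' g).comp w = g.comp w := by
        have hwm : Polynomial.map τ' w = w := by
          rw [hw, Polynomial.map_sub, Polynomial.map_pow, Polynomial.map_X]
        calc (Polynomial.map τ' g).comp w = (Polynomial.map τ' g).comp (Polynomial.map τ' w) := by
              rw [hwm]
          _ = Polynomial.map τ' (g.comp w) := (Polynomial.map_comp τ' g w).symm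
          _ = Polynomial.map τ' (ψ b) := by rw [← hg]
          _ = ψ b := h1
          _ = g.comp w := hg
      have h3 : (Polynomial.map τ' g - g).comp w = 0 := by
        rw [Polynomial.sub_comp, h2, sub_self]
      have h4 : Polynomial.map τ' g = g := by
        rcases Polynomial.comp_eq_zero_iff.mp h3 with h | ⟨_, hcw⟩
        · exact sub_eq_zero.mp h
        · exfalso
          have := congrArg Polynomial.natDegree hcw
          rw [w_natDegree (p := p), Polynomial.natDegree_C] at this
          omega
      have := congrArg (fun q => Polynomial.coeff q i) h4
      simp [Polynomial.coeff_map] at this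
      exact this
    -- write b as a polynomial in the generators
    have hb : b = ∑ e ∈ g.support,
        MvPolynomial.rename Fin.succ (g.coeff e) *
          (MvPolynomial.X 0 ^ p - MvPolynomial.X 0) ^ e := by
      have hsymC : ∀ a : MvPolynomial (Fin n) k, ψ.symm (Polynomial.C a)
          = MvPolynomial.rename Fin.succ a := by
        intro a
        have := congrArg ψ.symm (psi_C_eq (n := n) a)
        rw [AlgEquiv.symm_apply_apply] at this
        exact this.symm
      have hsymX : ψ.symm Polynomial.X = MvPolynomial.X 0 := by
        have := congrArg ψ.symm (MvPolynomial.finSuccEquiv_X_zero (R := k) (n := n))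
        rw [AlgEquiv.symm_apply_apply] at this
        exact this.symm
      have hbsym : b = ψ.symm (g.comp w) := by
        rw [← hg, AlgEquiv.symm_apply_apply]
      rw [hbsym, Polynomial.comp_eq_sum_left, Polynomial.sum]
      rw [map_sum]
      refine Finset.sum_congr rfl fun e _ => ?_
      rw [map_mul, map_pow, hsymC, hw, map_sub, map_pow, hsymX]
    rw [hb]
    refine Subalgebra.sum_mem _ fun e _ => ?_
    refine Subalgebra.mul_mem _ ?_ (Subalgebra.pow_mem _ ?_ e)
    · obtain ⟨γ, hγ⟩ := ih (g.coeff e) (fun j => hcoeff j e)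
      have hγ' : MvPolynomial.aeval
          (fun j : Fin n => MvPolynomial.X j - MvPolynomial.X j ^ p) γ = g.coeff e := hγ
      refine ⟨MvPolynomial.rename Fin.succ γ, ?_⟩
      show MvPolynomial.aeval _ (MvPolynomial.rename Fin.succ γ) = _
      rw [rename_aeval_t, hγ']
    · refine ⟨-MvPolynomial.X 0, ?_⟩
      show MvPolynomial.aeval _ (-MvPolynomial.X 0) = _
      rw [map_neg, MvPolynomial.aeval_X]
      ring

section PartB

variable {p : ℕ} [Fact p.Prime] {k : Type} [Field k] {n : ℕ}

lemma dsum_add (a b : Fin n →₀ ℕ) :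
    ((a + b).sum fun _ x => x) = (a.sum fun _ x => x) + (b.sum fun _ x => x) :=
  Finsupp.sum_add_index' (fun _ => rfl) (fun _ _ _ => rfl)

lemma dsum_single (j : Fin n) (c : ℕ) : ((Finsupp.single j c).sum fun _ x => x) = c :=
  Finsupp.sum_single_index rfl

lemma dsum_smul (e : Fin n →₀ ℕ) :
    ((p • e).sum fun _ x => x) = p * (e.sum fun _ x => x) := by
  rw [Finsupp.sum_smul_index' (fun _ => rfl)]
  simp only [smul_eq_mul]
  rw [Finsupp.sum, Finsupp.sum, Finset.mul_sum]

lemma arith_le {i c : ℕ} (hp2 : 2 ≤ p) (hi : i ≤ c) : i + p * (c - i) ≤ p * c := by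
  obtain ⟨s, rfl⟩ : ∃ s, c = i + s := ⟨c - i, (Nat.add_sub_cancel' hi).symm⟩
  rw [Nat.add_sub_cancel_left, Nat.mul_add]
  have hip : i ≤ p * i := Nat.le_mul_of_pos_left i (by omega)
  omega

lemma arith_eq {i c : ℕ} (hp2 : 2 ≤ p) (hi : i ≤ c) :
    i + p * (c - i) = p * c ↔ i = 0 := by
  obtain ⟨s, rfl⟩ : ∃ s, c = i + s := ⟨c - i, (Nat.add_sub_cancel' hi).symm⟩
  rw [Nat.add_sub_cancel_left, Nat.mul_add]
  have hip : i ≤ p * i := Nat.le_mul_of_pos_left i (by omega)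
  constructor
  · intro h
    have h2 : i = p * i := by omega
    by_contra h0
    have : i < p * i := lt_of_lt_of_le (by omega : i < 2 * i) (Nat.mul_le_mul_right i hp2)
    omega
  · rintro rfl; simp

lemma arith_ge {i c : ℕ} (hi : i ≤ c) : c ≤ i + p * (c - i) := by
  have hp1 : 1 ≤ p := (Fact.out : p.Prime).one_le
  obtain ⟨s, rfl⟩ : ∃ s, c = i + s := ⟨c - i, (Nat.add_sub_cancel' hi).symm⟩
  rw [Nat.add_sub_cancel_left]
  have : s ≤ p * s := Nat.le_mul_of_pos_left s (by omega)
  omega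

lemma arith_eq' {i c : ℕ} (hp2 : 2 ≤ p) (hi : i ≤ c) :
    i + p * (c - i) = c ↔ i = c := by
  obtain ⟨s, rfl⟩ : ∃ s, c = i + s := ⟨c - i, (Nat.add_sub_cancel' hi).symm⟩
  rw [Nat.add_sub_cancel_left]
  have hip : s ≤ p * s := Nat.le_mul_of_pos_left s (by omega)
  constructor
  · intro h
    have h2 : p * s = s := by omega
    have h3 : s = 0 := by
      by_contra h0
      have : s < p * s := lt_of_lt_of_le (by omega : s < 2 * s) (Nat.mul_le_mul_right s hp2)
      omega
    omega
  · intro h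
    have hs : s = 0 := by omega
    subst hs
    simp

lemma X_sub_pow_eq (j : Fin n) (c : ℕ) :
    ((MvPolynomial.X j : MvPolynomial (Fin n) k) - MvPolynomial.X j ^ p) ^ c =
      ∑ i ∈ Finset.range (c + 1),
        MvPolynomial.monomial (Finsupp.single j (i + p * (c - i)))
          ((-1 : k) ^ (c - i) * (c.choose i : k)) := by
  rw [sub_eq_add_neg, add_pow]
  refine Finset.sum_congr rfl fun i hi => ?_
  have h1 : (-(MvPolynomial.X j ^ p) : MvPolynomial (Fin n) k) ^ (c - i)
      = MvPolynomial.C ((-1 : k) ^ (c - i)) * MvPolynomial.X j ^ (p * (c - i)) := by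
    rw [neg_pow, ← pow_mul, map_pow, map_neg, map_one]
  rw [h1, MvPolynomial.X_pow_eq_monomial, MvPolynomial.X_pow_eq_monomial]
  have h3 : ((c.choose i : ℕ) : MvPolynomial (Fin n) k)
      = MvPolynomial.C ((c.choose i : ℕ) : k) :=
    (map_natCast (MvPolynomial.C : k →+* MvPolynomial (Fin n) k) _).symm
  rw [h3, MvPolynomial.C_mul_monomial, MvPolynomial.monomial_mul,
    mul_comm _ (MvPolynomial.C ((c.choose i : ℕ) : k)), MvPolynomial.C_mul_monomial,
    ← Finsupp.single_add]
  congr 1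
  ring

lemma coeff_X_sub_pow_top (j : Fin n) (c : ℕ) (d : Fin n →₀ ℕ)
    (hd : p * c ≤ d.sum fun _ x => x) :
    MvPolynomial.coeff d (((MvPolynomial.X j : MvPolynomial (Fin n) k)
        - MvPolynomial.X j ^ p) ^ c)
      = if d = Finsupp.single j (p * c) then (-1 : k) ^ c else 0 := by
  have hp2 : 2 ≤ p := (Fact.out : p.Prime).two_le
  rw [X_sub_pow_eq, MvPolynomial.coeff_sum]
  simp only [MvPolynomial.coeff_monomial]
  by_cases hc : d = Finsupp.single j (p * c)
  · rw [if_pos hc]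
    rw [Finset.sum_eq_single 0]
    · rw [if_pos (by rw [hc]; congr 1; simp)]
      simp
    · intro i hi hne
      rw [Finset.mem_range] at hi
      rw [if_neg]
      intro heq
      rw [hc] at heq
      have := congrArg (fun f => f j) heq
      simp only [Finsupp.single_eq_same] at this
      exact hne ((arith_eq hp2 (by omega)).1 this)
    · intro h0
      exact absurd (Finset.mem_range.2 (by omega)) h0
  · rw [if_neg hc]
    refine Finset.sum_eq_zero fun i hi => ?_
    rw [Finset.mem_range] at hi
    rw [if_neg]
    intro heq
    have hds : (d.sum fun _ x => x) = i + p * (c - i) := by rw [← heq, dsum_single]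
    have hle : i + p * (c - i) ≤ p * c := arith_le hp2 (by omega)
    have : i + p * (c - i) = p * c := le_antisymm hle (hds ▸ hd)
    have hi0 : i = 0 := (arith_eq hp2 (by omega)).1 this
    apply hc
    rw [← heq, hi0]
    congr 1
    simp

lemma coeff_X_sub_pow_bot (j : Fin n) (c : ℕ) (d : Fin n →₀ ℕ)
    (hd : (d.sum fun _ x => x) ≤ c) :
    MvPolynomial.coeff d (((MvPolynomial.X j : MvPolynomial (Fin n) k)
        - MvPolynomial.X j ^ p) ^ c)
      = if d = Finsupp.single j c then 1 else 0 := by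
  have hp2 : 2 ≤ p := (Fact.out : p.Prime).two_le
  rw [X_sub_pow_eq, MvPolynomial.coeff_sum]
  simp only [MvPolynomial.coeff_monomial]
  by_cases hc : d = Finsupp.single j c
  · rw [if_pos hc]
    rw [Finset.sum_eq_single c]
    · rw [if_pos (by rw [hc]; congr 1; simp)]
      simp
    · intro i hi hne
      rw [Finset.mem_range] at hi
      rw [if_neg]
      intro heq
      rw [hc] at heq
      have := congrArg (fun f => f j) heq
      simp only [Finsupp.single_eq_same] at this
      exact hne ((arith_eq' hp2 (by omega)).1 this)
    · intro h0
      exact absurd (Finset.mem_range.2 (by omega)) h0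
  · rw [if_neg hc]
    refine Finset.sum_eq_zero fun i hi => ?_
    rw [Finset.mem_range] at hi
    rw [if_neg]
    intro heq
    have hds : (d.sum fun _ x => x) = i + p * (c - i) := by rw [← heq, dsum_single]
    have hge : c ≤ i + p * (c - i) := arith_ge (p := p) (by omega)
    have : i + p * (c - i) = c := le_antisymm (hds ▸ hd) hge
    have hic : i = c := (arith_eq' hp2 (by omega)).1 this
    apply hc
    rw [← heq, hic]
    congr 1
    simp

lemma coeff_T_top (e d : Fin n →₀ ℕ)
    (hd : p * (e.sum fun _ x => x) ≤ d.sum fun _ x => x) :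
    MvPolynomial.coeff d
        (e.prod fun i c => ((MvPolynomial.X i : MvPolynomial (Fin n) k)
          - MvPolynomial.X i ^ p) ^ c)
      = if d = p • e then (-1 : k) ^ (e.sum fun _ x => x) else 0 := by
  induction e using Finsupp.induction generalizing d with
  | zero =>
    rw [Finsupp.prod_zero_index]
    rw [MvPolynomial.coeff_one]
    simp only [Finsupp.sum_zero_index, smul_zero, pow_zero]
    by_cases h : d = 0
    · rw [if_pos h.symm, if_pos h]
    · rw [if_neg (fun hh => h hh.symm), if_neg h]
  | single_add j c e hje hc ih =>
    rw [Finsupp.prod_add_index' (fun _ => pow_zero _) (fun _ b₁ b₂ => pow_add _ b₁ b₂),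
      Finsupp.prod_single_index
        (h := fun (i : Fin n) (c : ℕ) =>
          ((MvPolynomial.X i : MvPolynomial (Fin n) k) - MvPolynomial.X i ^ p) ^ c)
        (pow_zero _), MvPolynomial.coeff_mul]
    have hp2 : 2 ≤ p := (Fact.out : p.Prime).two_le
    have hsum : ((Finsupp.single j c + e).sum fun _ x => x) = c + (e.sum fun _ x => x) := by
      rw [dsum_add, dsum_single]
    rw [hsum] at hd
    have key : ∀ uv ∈ Finset.HasAntidiagonal.antidiagonal d,
        MvPolynomial.coeff uv.1
            (((MvPolynomial.X j : MvPolynomial (Fin n) k) - MvPolynomial.X j ^ p) ^ c) *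
          MvPolynomial.coeff uv.2
            (e.prod fun i c => ((MvPolynomial.X i : MvPolynomial (Fin n) k)
              - MvPolynomial.X i ^ p) ^ c)
          = if uv = (Finsupp.single j (p * c), p • e)
              then (-1 : k) ^ c * (-1 : k) ^ (e.sum fun _ x => x) else 0 := by
      rintro ⟨u, v⟩ huv
      rw [Finset.HasAntidiagonal.mem_antidiagonal] at huv
      have hduv : (d.sum fun _ x => x) = (u.sum fun _ x => x) + (v.sum fun _ x => x) := by
        rw [← huv, dsum_add]
      by_cases hu : p * c ≤ u.sum fun _ x => x
      · rw [coeff_X_sub_pow_top j c u hu]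
        by_cases hu2 : u = Finsupp.single j (p * c)
        · rw [if_pos hu2]
          have hus : (u.sum fun _ x => x) = p * c := by rw [hu2, dsum_single]
          have hvs : p * (e.sum fun _ x => x) ≤ v.sum fun _ x => x := by
            have h1 : p * c + p * (e.sum fun _ x => x)
                ≤ (u.sum fun _ x => x) + (v.sum fun _ x => x) := by
              rw [← hduv, ← Nat.mul_add]; exact hd
            rw [hus] at h1
            exact Nat.le_of_add_le_add_left h1
          rw [ih v hvs]
          by_cases hv2 : v = p • e
          · rw [if_pos hv2, if_pos (by rw [hu2, hv2])]
          · rw [if_neg hv2, mul_zero,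
              if_neg (fun hpair => hv2 (congrArg Prod.snd hpair))]
        · rw [if_neg hu2, zero_mul,
            if_neg (fun hpair => hu2 (congrArg Prod.fst hpair))]
      · push_neg at hu
        have hvs : p * (e.sum fun _ x => x) < v.sum fun _ x => x := by
          have h1 : p * c + p * (e.sum fun _ x => x)
              ≤ (u.sum fun _ x => x) + (v.sum fun _ x => x) := by
            rw [← hduv, ← Nat.mul_add]; exact hd
          have h2 : (u.sum fun _ x => x) + (v.sum fun _ x => x)
              < p * c + (v.sum fun _ x => x) := by omega
          have := lt_of_le_of_lt h1 h2
          exact Nat.lt_of_add_lt_add_left this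
        rw [ih v (le_of_lt hvs)]
        have hv2 : v ≠ p • e := by
          intro hv
          rw [hv, dsum_smul] at hvs
          omega
        rw [if_neg hv2, mul_zero,
          if_neg (fun hpair => hv2 (congrArg Prod.snd hpair))]
    rw [Finset.sum_congr rfl key, Finset.sum_ite_eq' (Finset.HasAntidiagonal.antidiagonal d)]
    simp only [Finset.HasAntidiagonal.mem_antidiagonal]
    have hsingle : Finsupp.single j (p * c) + p • e = p • (Finsupp.single j c + e) := by
      rw [smul_add, Finsupp.smul_single, smul_eq_mul]
    rw [hsum, pow_add]
    by_cases hh : d = p • (Finsupp.single j c + e)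
    · rw [if_pos (by rw [hh, hsingle]), if_pos hh]
    · rw [if_neg (fun hx => hh (by rw [← hx, hsingle])), if_neg hh]

lemma coeff_T_bot (e d : Fin n →₀ ℕ)
    (hd : (d.sum fun _ x => x) ≤ e.sum fun _ x => x) :
    MvPolynomial.coeff d
        (e.prod fun i c => ((MvPolynomial.X i : MvPolynomial (Fin n) k)
          - MvPolynomial.X i ^ p) ^ c)
      = if d = e then 1 else 0 := by
  induction e using Finsupp.induction generalizing d with
  | zero =>
    rw [Finsupp.prod_zero_index, MvPolynomial.coeff_one]
    by_cases h : d = 0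
    · rw [if_pos h.symm, if_pos h]
    · rw [if_neg (fun hh => h hh.symm), if_neg h]
  | single_add j c e hje hc ih =>
    rw [Finsupp.prod_add_index' (fun _ => pow_zero _) (fun _ b₁ b₂ => pow_add _ b₁ b₂),
      Finsupp.prod_single_index
        (h := fun (i : Fin n) (c : ℕ) =>
          ((MvPolynomial.X i : MvPolynomial (Fin n) k) - MvPolynomial.X i ^ p) ^ c)
        (pow_zero _), MvPolynomial.coeff_mul]
    have hp2 : 2 ≤ p := (Fact.out : p.Prime).two_le
    have hsum : ((Finsupp.single j c + e).sum fun _ x => x) = c + (e.sum fun _ x => x) := by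
      rw [dsum_add, dsum_single]
    rw [hsum] at hd
    have key : ∀ uv ∈ Finset.HasAntidiagonal.antidiagonal d,
        MvPolynomial.coeff uv.1
            (((MvPolynomial.X j : MvPolynomial (Fin n) k) - MvPolynomial.X j ^ p) ^ c) *
          MvPolynomial.coeff uv.2
            (e.prod fun i c => ((MvPolynomial.X i : MvPolynomial (Fin n) k)
              - MvPolynomial.X i ^ p) ^ c)
          = if uv = (Finsupp.single j c, e) then 1 else 0 := by
      rintro ⟨u, v⟩ huv
      rw [Finset.HasAntidiagonal.mem_antidiagonal] at huv
      have hduv : (d.sum fun _ x => x) = (u.sum fun _ x => x) + (v.sum fun _ x => x) := by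
        rw [← huv, dsum_add]
      by_cases hu : (u.sum fun _ x => x) ≤ c
      · rw [coeff_X_sub_pow_bot j c u hu]
        by_cases hu2 : u = Finsupp.single j c
        · rw [if_pos hu2]
          have hus : (u.sum fun _ x => x) = c := by rw [hu2, dsum_single]
          have hvs : (v.sum fun _ x => x) ≤ e.sum fun _ x => x := by omega
          rw [ih v hvs]
          by_cases hv2 : v = e
          · rw [if_pos hv2, if_pos (by rw [hu2, hv2]), one_mul]
          · rw [if_neg hv2, mul_zero,
              if_neg (fun hpair => hv2 (congrArg Prod.snd hpair))]
        · rw [if_neg hu2, zero_mul,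
            if_neg (fun hpair => hu2 (congrArg Prod.fst hpair))]
      · push_neg at hu
        have hvs : (v.sum fun _ x => x) < e.sum fun _ x => x := by omega
        rw [ih v (le_of_lt hvs)]
        have hv2 : v ≠ e := fun hv => by rw [hv] at hvs; omega
        rw [if_neg hv2, mul_zero,
          if_neg (fun hpair => hv2 (congrArg Prod.snd hpair))]
    rw [Finset.sum_congr rfl key, Finset.sum_ite_eq' (Finset.HasAntidiagonal.antidiagonal d)]
    simp only [Finset.HasAntidiagonal.mem_antidiagonal]
    by_cases hh : d = Finsupp.single j c + e
    · rw [if_pos hh.symm, if_pos hh]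
    · rw [if_neg (fun hx => hh hx.symm), if_neg hh]

end PartB

end Aux

open MvPolynomial

/-- If `b ∈ k[s_1,…,s_n]` (char `k` = `p`) has total degree at most `p·m`, is invariant
under all shifts `s_j ↦ s_j + 1`, and all its monomials have degree at least `m`, then
`b = β(s_1 − s_1^p, …, s_n − s_n^p)` for a homogeneous polynomial `β` of degree `m`. -/
theorem shift_invariant_bounded_eq_homogeneous_subst
    {p : ℕ} [Fact p.Prime] {k : Type} [Field k] [CharP k p] {n : ℕ} (hn : 1 ≤ n)
    (m : ℕ) (b : MvPolynomial (Fin n) k)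
    (hdeg : b.totalDegree ≤ p * m)
    (hinv : ∀ j : Fin n,
      aeval (fun l : Fin n => if l = j then X l + 1 else X l) b = b)
    (hlow : ∀ d ∈ b.support, m ≤ d.sum fun _ e => e) :
    ∃ β : MvPolynomial (Fin n) k, β.IsHomogeneous m ∧
      b = aeval (fun j : Fin n => X j - X j ^ p) β := by
  have hp2 : 2 ≤ p := (Fact.out : p.Prime).two_le
  obtain ⟨F, hF⟩ := invariant_mem_range (p := p) n b hinv
  have hF' : MvPolynomial.aeval
      (fun j : Fin n => MvPolynomial.X j - MvPolynomial.X j ^ p) F = b := hF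
  by_cases hF0 : F = 0
  · exact ⟨0, MvPolynomial.isHomogeneous_zero _ _ _, by rw [← hF', hF0]⟩
  have hexp : ∀ d, MvPolynomial.coeff d b = ∑ e ∈ F.support,
      MvPolynomial.coeff e F * MvPolynomial.coeff d
        (e.prod fun i c => ((MvPolynomial.X i : MvPolynomial (Fin n) k)
          - MvPolynomial.X i ^ p) ^ c) := by
    intro d
    have h1 : MvPolynomial.aeval
        (fun j : Fin n => MvPolynomial.X j - MvPolynomial.X j ^ p) F
        = ∑ e ∈ F.support, MvPolynomial.C (MvPolynomial.coeff e F) *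
            (e.prod fun i c => ((MvPolynomial.X i : MvPolynomial (Fin n) k)
              - MvPolynomial.X i ^ p) ^ c) := by
      conv_lhs => rw [MvPolynomial.as_sum F]
      rw [map_sum]
      refine Finset.sum_congr rfl fun e _ => ?_
      rw [MvPolynomial.aeval_monomial, MvPolynomial.algebraMap_eq]
    rw [← hF', h1, MvPolynomial.coeff_sum]
    exact Finset.sum_congr rfl fun e _ => MvPolynomial.coeff_C_mul _ _ _
  have hsupp : F.support.Nonempty := MvPolynomial.support_nonempty.2 hF0
  -- minimal-degree monomial of F
  obtain ⟨dmin, hdmin_mem, hdmin⟩ :=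
    F.support.exists_min_image (fun d => d.sum fun _ x => x) hsupp
  have hminb : MvPolynomial.coeff dmin b = MvPolynomial.coeff dmin F := by
    rw [hexp dmin, Finset.sum_eq_single dmin]
    · rw [coeff_T_bot dmin dmin le_rfl, if_pos rfl, mul_one]
    · intro e he hne
      rw [coeff_T_bot e dmin (hdmin e he), if_neg (fun h => hne h.symm), mul_zero]
    · intro h; exact absurd hdmin_mem h
  have hm_le : m ≤ dmin.sum fun _ x => x := by
    apply hlow
    rw [MvPolynomial.mem_support_iff, hminb]
    exact MvPolynomial.mem_support_iff.1 hdmin_mem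
  -- maximal-degree monomial of F
  obtain ⟨dmax, hdmax_mem, hdmax⟩ :=
    F.support.exists_max_image (fun d => d.sum fun _ x => x) hsupp
  have htopb : MvPolynomial.coeff (p • dmax) b
      = MvPolynomial.coeff dmax F * (-1 : k) ^ (dmax.sum fun _ x => x) := by
    rw [hexp (p • dmax), Finset.sum_eq_single dmax]
    · rw [coeff_T_top dmax (p • dmax) (by rw [dsum_smul]), if_pos rfl]
    · intro e he hne
      have hle : p * (e.sum fun _ x => x) ≤ (p • dmax).sum fun _ x => x := by
        rw [dsum_smul]
        exact Nat.mul_le_mul_left p (hdmax e he)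
      rw [coeff_T_top e _ hle, if_neg, mul_zero]
      intro heq
      apply hne
      ext a
      have := congrArg (fun f : Fin n →₀ ℕ => f a) heq
      simp only [Finsupp.smul_apply, smul_eq_mul] at this
      exact (Nat.eq_of_mul_eq_mul_left (by omega) this).symm
    · intro h; exact absurd hdmax_mem h
  have hDm : (dmax.sum fun _ x => x) ≤ m := by
    have hne0 : MvPolynomial.coeff (p • dmax) b ≠ 0 := by
      rw [htopb]
      exact mul_ne_zero (MvPolynomial.mem_support_iff.1 hdmax_mem)
        (pow_ne_zero _ (neg_ne_zero.2 one_ne_zero))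
    have h1 := MvPolynomial.le_totalDegree (MvPolynomial.mem_support_iff.2 hne0)
    rw [dsum_smul] at h1
    exact Nat.le_of_mul_le_mul_left (le_trans h1 hdeg) (by omega)
  refine ⟨F, ?_, hF'.symm⟩
  intro d hd
  have h1 : (d.sum fun _ x => x) ≤ dmax.sum fun _ x => x :=
    hdmax d (MvPolynomial.mem_support_iff.2 hd)
  have h2 : (dmin.sum fun _ x => x) ≤ d.sum fun _ x => x :=
    hdmin d (MvPolynomial.mem_support_iff.2 hd)
  have hdm : (d.sum fun _ x => x) = m :=
    le_antisymm (le_trans h1 hDm) (le_trans hm_le h2)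
  simpa [Finsupp.weight_apply, smul_eq_mul] using hdm
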